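/- Let F(e, θ₀) = (f₁(e,θ₀), f₂(e,θ₀)) with f₁(e,θ₀) = (3√(1−e²))/(32 H₀³ (1+e cos θ₀)^{3/2}) · [3e² − 8H₀ − 4e(−1+2H₀)cos θ₀ + e² cos 2θ₀] and f₂(e,θ₀) = (3e√(1−e²) sin θ₀)/(16 H₀³ √(1+e cos θ₀)). For H₀ ∈ (−1/2, 0), the Jacobian determinant of F at (e, θ₀) = (−2H₀, π) equals 9(2H₀ − 1)/(64 H₀⁵), which is nonzero. -/

import Mathlib

open Real

/-- The Jacobian determinant of `F = (f₁, f₂)` at `(e, θ₀) = (−2H₀, π)` equals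
`9(2H₀ − 1)/(64 H₀⁵) ≠ 0`. -/
theorem jacobian_at_simple_zero (H₀ : ℝ) (hH1 : -1/2 < H₀) (hH2 : H₀ < 0)
    (f₁ f₂ : ℝ → ℝ → ℝ)
    (hf₁ : ∀ e θ₀, f₁ e θ₀ =
      3 * Real.sqrt (1 - e ^ 2) / (32 * H₀ ^ 3 * (1 + e * Real.cos θ₀) ^ ((3:ℝ)/2)) *
        (3 * e ^ 2 - 8 * H₀ - 4 * e * (-1 + 2 * H₀) * Real.cos θ₀ +
          e ^ 2 * Real.cos (2 * θ₀)))
    (hf₂ : ∀ e θ₀, f₂ e θ₀ =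
      3 * e * Real.sqrt (1 - e ^ 2) * Real.sin θ₀ /
        (16 * H₀ ^ 3 * Real.sqrt (1 + e * Real.cos θ₀))) :
    ∃ a b c d : ℝ,
      HasDerivAt (fun e => f₁ e π) a (-2 * H₀) ∧
      HasDerivAt (fun θ₀ => f₁ (-2 * H₀) θ₀) b π ∧
      HasDerivAt (fun e => f₂ e π) c (-2 * H₀) ∧
      HasDerivAt (fun θ₀ => f₂ (-2 * H₀) θ₀) d π ∧
      a * d - b * c = 9 * (2 * H₀ - 1) / (64 * H₀ ^ 5) ∧
      a * d - b * c ≠ 0 := by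
  have hH0 : H₀ ≠ 0 := ne_of_lt hH2
  have h2H : (0:ℝ) < 1 + 2 * H₀ := by linarith
  have h2H' : (0:ℝ) < 1 - 2 * H₀ := by linarith
  have hbase : (1 : ℝ) + -2 * H₀ * Real.cos π = 1 + 2 * H₀ := by
    rw [Real.cos_pi]; ring
  have hspos : 0 < Real.sqrt (1 - 2 * H₀) := Real.sqrt_pos.mpr h2H'
  have hs2 : Real.sqrt (1 - 2 * H₀) ^ 2 = 1 - 2 * H₀ := Real.sq_sqrt h2H'.le
  have hspos' : 0 < Real.sqrt (1 + 2 * H₀) := Real.sqrt_pos.mpr h2H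
  refine ⟨-3 * Real.sqrt (1 - 2 * H₀) / (8 * H₀ ^ 3), 0, 0,
    3 * Real.sqrt (1 - 2 * H₀) / (8 * H₀ ^ 2), ?_, ?_, ?_, ?_, ?_, ?_⟩
  · -- ∂f₁/∂e at (-2H₀, π)
    have h1 : HasDerivAt (fun e : ℝ => 1 + e) 1 (-2 * H₀) := by
      exact (hasDerivAt_id (-2 * H₀)).const_add 1
    have h2 : HasDerivAt (fun e : ℝ => Real.sqrt (1 + e))
        (1 / (2 * Real.sqrt (1 + -2 * H₀))) (-2 * H₀) :=
      h1.sqrt (by norm_num; linarith)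
    have h3 : HasDerivAt (fun e : ℝ => e + 2 * H₀) 1 (-2 * H₀) :=
      (hasDerivAt_id _).add_const _
    have h4 := ((h3.mul h2).const_mul (-3)).div_const (8 * H₀ ^ 3)
    have hA : HasDerivAt (fun e : ℝ => -3 * ((e + 2 * H₀) * Real.sqrt (1 + e)) / (8 * H₀ ^ 3))
        (-3 * Real.sqrt (1 - 2 * H₀) / (8 * H₀ ^ 3)) (-2 * H₀) := by
      refine h4.congr_deriv ?_
      rw [show (1 : ℝ) + -2 * H₀ = 1 - 2 * H₀ by ring]
      ring
    refine hA.congr_of_eventuallyEq ?_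
    have hmem : ∀ᶠ e in nhds (-2 * H₀ : ℝ), e ∈ Set.Ioo (-1 : ℝ) 1 :=
      isOpen_Ioo.eventually_mem ⟨by linarith, by linarith⟩
    filter_upwards [hmem] with e he
    obtain ⟨he1, he2⟩ := he
    have h1e : (0:ℝ) < 1 - e := by linarith
    have h1e' : (0:ℝ) < 1 + e := by linarith
    have hs1 : (0:ℝ) < Real.sqrt (1 - e) := Real.sqrt_pos.mpr h1e
    rw [hf₁, Real.cos_pi, Real.cos_two_pi]
    have hrw : ((1 : ℝ) + e * (-1)) ^ ((3:ℝ)/2) = (1 - e) * Real.sqrt (1 - e) := by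
      rw [show ((1 : ℝ) + e * (-1)) = 1 - e by ring,
        show ((3:ℝ)/2) = 1 + 1/2 by norm_num, Real.rpow_add h1e, Real.rpow_one,
        ← Real.sqrt_eq_rpow]
    rw [hrw, show (1 : ℝ) - e ^ 2 = (1 - e) * (1 + e) by ring, Real.sqrt_mul h1e.le]
    field_simp
    ring
  · -- ∂f₁/∂θ₀ at (-2H₀, π) = 0
    simp only [hf₁]
    have hc : HasDerivAt Real.cos (-Real.sin π) π := Real.hasDerivAt_cos π
    have hden0 : HasDerivAt (fun θ : ℝ => 1 + -2 * H₀ * Real.cos θ)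
        (-2 * H₀ * -Real.sin π) π := by
      exact (hc.const_mul (-2 * H₀)).const_add 1
    have hden : HasDerivAt (fun θ : ℝ => (1 + -2 * H₀ * Real.cos θ) ^ ((3:ℝ)/2))
        ((-2 * H₀ * -Real.sin π) * ((3:ℝ)/2) * (1 + -2 * H₀ * Real.cos π) ^ ((3:ℝ)/2 - 1)) π :=
      hden0.rpow_const (Or.inr (by norm_num))
    have hdne : (32 : ℝ) * H₀ ^ 3 * (1 + -2 * H₀ * Real.cos π) ^ ((3:ℝ)/2) ≠ 0 := by
      apply mul_ne_zero (by positivity)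
      rw [hbase]
      exact ne_of_gt (Real.rpow_pos_of_pos h2H _)
    have hF1 : HasDerivAt
        (fun θ : ℝ => 3 * Real.sqrt (1 - (-2 * H₀) ^ 2) /
          (32 * H₀ ^ 3 * (1 + -2 * H₀ * Real.cos θ) ^ ((3:ℝ)/2)))
        ((0 * (32 * H₀ ^ 3 * (1 + -2 * H₀ * Real.cos π) ^ ((3:ℝ)/2)) -
          3 * Real.sqrt (1 - (-2 * H₀) ^ 2) *
            (32 * H₀ ^ 3 * ((-2 * H₀ * -Real.sin π) * ((3:ℝ)/2) *
              (1 + -2 * H₀ * Real.cos π) ^ ((3:ℝ)/2 - 1)))) /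
          (32 * H₀ ^ 3 * (1 + -2 * H₀ * Real.cos π) ^ ((3:ℝ)/2)) ^ 2) π :=
      (hasDerivAt_const π _).div (hden.const_mul (32 * H₀ ^ 3)) hdne
    have hcos2 : HasDerivAt (fun θ : ℝ => Real.cos (2 * θ)) (-Real.sin (2 * π) * (2 * 1)) π :=
      (Real.hasDerivAt_cos (2 * π)).comp π ((hasDerivAt_id π).const_mul 2)
    have hP : HasDerivAt
        (fun θ : ℝ => 3 * (-2 * H₀) ^ 2 - 8 * H₀ - 4 * (-2 * H₀) * (-1 + 2 * H₀) * Real.cos θ +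
          (-2 * H₀) ^ 2 * Real.cos (2 * θ))
        ((0 - 4 * (-2 * H₀) * (-1 + 2 * H₀) * -Real.sin π) +
          (-2 * H₀) ^ 2 * (-Real.sin (2 * π) * (2 * 1))) π := by
      exact (((hasDerivAt_const π (3 * (-2 * H₀) ^ 2 - 8 * H₀)).sub
        (hc.const_mul (4 * (-2 * H₀) * (-1 + 2 * H₀)))).add
        (hcos2.const_mul ((-2 * H₀) ^ 2)))
    have hB := hF1.mul hP
    refine hB.congr_deriv ?_
    simp [Real.sin_pi, Real.sin_two_pi]
  · -- ∂f₂/∂e at (-2H₀, π) = 0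
    simp only [hf₂, Real.sin_pi, mul_zero, zero_div]
    exact hasDerivAt_const _ 0
  · -- ∂f₂/∂θ₀ at (-2H₀, π)
    simp only [hf₂]
    have hc : HasDerivAt Real.cos (-Real.sin π) π := Real.hasDerivAt_cos π
    have hden0 : HasDerivAt (fun θ : ℝ => 1 + -2 * H₀ * Real.cos θ)
        (-2 * H₀ * -Real.sin π) π := by
      exact (hc.const_mul (-2 * H₀)).const_add 1
    have hdb : (1 : ℝ) + -2 * H₀ * Real.cos π ≠ 0 := by rw [hbase]; linarith
    have hD0 : HasDerivAt (fun θ : ℝ => Real.sqrt (1 + -2 * H₀ * Real.cos θ))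
        ((-2 * H₀ * -Real.sin π) / (2 * Real.sqrt (1 + -2 * H₀ * Real.cos π))) π :=
      hden0.sqrt hdb
    have hN : HasDerivAt (fun θ : ℝ => 3 * (-2 * H₀) * Real.sqrt (1 - (-2 * H₀) ^ 2) * Real.sin θ)
        (3 * (-2 * H₀) * Real.sqrt (1 - (-2 * H₀) ^ 2) * Real.cos π) π := by
      exact (Real.hasDerivAt_sin π).const_mul (3 * (-2 * H₀) * Real.sqrt (1 - (-2 * H₀) ^ 2))
    have hDne : (16 : ℝ) * H₀ ^ 3 * Real.sqrt (1 + -2 * H₀ * Real.cos π) ≠ 0 := by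
      apply mul_ne_zero (by positivity)
      rw [hbase]
      exact ne_of_gt hspos'
    have hq := hN.div (hD0.const_mul (16 * H₀ ^ 3)) hDne
    refine hq.congr_deriv ?_
    rw [Real.sin_pi, Real.cos_pi, show (1 : ℝ) + -2 * H₀ * (-1) = (1 + 2 * H₀) by ring,
      show (1 : ℝ) - (-2 * H₀) ^ 2 = (1 + 2 * H₀) * (1 - 2 * H₀) by ring,
      Real.sqrt_mul h2H.le]
    field_simp
    ring
  · -- determinant value
    field_simp
    linear_combination (-576 : ℝ) * hs2
  · -- nonzero
    have hlt : (9 : ℝ) * (2 * H₀ - 1) / (64 * H₀ ^ 5) ≠ 0 := by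
      apply div_ne_zero (ne_of_lt (by nlinarith)) (by positivity)
    intro h
    apply hlt
    rw [← h]
    field_simp
    linear_combination (576 : ℝ) * hs2
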